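/- Let A be an invertible n×n matrix over a field whose support is acyclic (the transitive closure of {(i,j) : i ≠ j, A(i,j) ≠ 0} is antisymmetric, so A is triangular up to permutation with invertible diagonal). Then A⁻¹(i,j) = ∑_p (−1)^{ℓ(p)+1} A[p], where the sum runs over paths p = (p₀,...,p_m) from i to j supported on the off-diagonal part of A, ℓ(p) = m, and A[p] = A(p₀,p₀)⁻¹A(p₀,p₁)A(p₁,p₁)⁻¹ ··· A(p_m,p_m)⁻¹ (the length-0 path contributing A(i,i)⁻¹ when i = j). -/

import Mathlib

theorem pow_entry_aux {k I : Type*} [CommRing k] [Fintype I] [DecidableEq I]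
    (M : Matrix I I k) (m : ℕ) (i j : I) :
    (M ^ m) i j = ∑ p ∈ Finset.univ.filter
        (fun p : Fin (m + 1) → I => p 0 = i ∧ p (Fin.last m) = j),
      ∏ s : Fin m, M (p s.castSucc) (p s.succ) := by
  induction m generalizing i with
  | zero =>
    rw [pow_zero, Finset.sum_filter,
      ← (Equiv.funUnique (Fin 1) I).symm.sum_comp]
    simp only [Equiv.funUnique_symm_apply, Function.const_apply, Fin.last,
      Finset.univ_unique, Fin.prod_univ_zero, Matrix.one_apply]
    by_cases h : i = j
    · subst h
      simp
    · rw [if_neg h, Finset.sum_eq_zero]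
      intro x _
      rw [if_neg]
      rintro ⟨rfl, rfl⟩
      exact h rfl
  | succ m ih =>
    rw [pow_succ', Matrix.mul_apply]
    rw [Finset.sum_filter, ← (Fin.consEquiv (fun _ : Fin (m + 2) => I)).sum_comp,
      Fintype.sum_prod_type]
    simp only [Fin.consEquiv_apply, Fin.cons_zero, ← Fin.succ_last, Fin.cons_succ,
      Fin.prod_univ_succ, Fin.castSucc_zero, Fin.cons_zero, ← Fin.succ_castSucc,
      Fin.cons_succ, ite_and]
    rw [Finset.sum_comm]
    simp only [Finset.sum_ite_eq', Finset.mem_univ, if_true]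
    simp only [ih, Finset.sum_filter, Finset.mul_sum, ite_and, mul_ite, mul_zero]
    rw [Finset.sum_comm]
    refine Finset.sum_congr rfl fun q _ => ?_
    simp only [mul_ite, mul_zero, Finset.sum_ite_eq, Finset.mem_univ, if_true]

theorem nilp_aux {k I : Type*} [Field k] [Fintype I] [DecidableEq I]
    (r : I → I → Prop) (hacyc : ∀ i : I, ¬ Relation.TransGen r i i)
    (M : Matrix I I k) (hM : ∀ a b, M a b ≠ 0 → r a b) :
    M ^ (Fintype.card I) = 0 := by
  ext i j
  rw [pow_entry_aux, Matrix.zero_apply]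
  refine Finset.sum_eq_zero fun p _ => ?_
  by_contra hprod
  have steps : ∀ s : Fin (Fintype.card I), r (p s.castSucc) (p s.succ) := by
    intro s
    exact hM _ _ (Finset.prod_ne_zero_iff.mp hprod s (Finset.mem_univ s))
  have key : ∀ (d : ℕ) (s t : Fin (Fintype.card I + 1)), (t : ℕ) = s + d + 1 →
      Relation.TransGen r (p s) (p t) := by
    intro d
    induction d with
    | zero =>
      intro s t ht
      have hs : (s : ℕ) < Fintype.card I := by omega
      have h1 : (⟨(s : ℕ), hs⟩ : Fin (Fintype.card I)).castSucc = s := by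
        ext; simp
      have h2 : (⟨(s : ℕ), hs⟩ : Fin (Fintype.card I)).succ = t := by
        ext; simp [ht]
      have := steps ⟨(s : ℕ), hs⟩
      rw [h1, h2] at this
      exact Relation.TransGen.single this
    | succ d ihd =>
      intro s t ht
      have hs : (s : ℕ) < Fintype.card I := by omega
      set u : Fin (Fintype.card I + 1) := ⟨(s : ℕ) + 1, by omega⟩ with hu
      have h1 : (⟨(s : ℕ), hs⟩ : Fin (Fintype.card I)).castSucc = s := by
        ext; simp
      have h2 : (⟨(s : ℕ), hs⟩ : Fin (Fintype.card I)).succ = u := by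
        ext; simp [hu]
      have hstep := steps ⟨(s : ℕ), hs⟩
      rw [h1, h2] at hstep
      exact Relation.TransGen.head hstep (ihd u t (by simp [hu]; omega))
  have pinj : Function.Injective p := by
    intro s t hst
    by_contra hne
    rcases Ne.lt_or_gt (fun h : s = t => hne h) with h | h
    · exact hacyc (p s) (by nth_rewrite 2 [hst]; exact key ((t : ℕ) - s - 1) s t (by omega))
    · exact hacyc (p t) (by nth_rewrite 2 [← hst]; exact key ((s : ℕ) - t - 1) t s (by omega))
  have := Fintype.card_le_of_injective p pinj
  simp at this

theorem stmt12 {k I : Type*} [Field k] [Fintype I] [DecidableEq I]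
    (A : Matrix I I k) (hA : IsUnit A)
    (hdiag : ∀ i : I, A i i ≠ 0)
    (hacyc : ∀ i : I, ¬ Relation.TransGen (fun a b => a ≠ b ∧ A a b ≠ 0) i i) :
    ∀ i j : I, A⁻¹ i j =
      ∑ m ∈ Finset.range (Fintype.card I + 1),
        ∑ p ∈ Finset.univ.filter
            (fun p : Fin (m + 1) → I =>
              p 0 = i ∧ p (Fin.last m) = j ∧ ∀ s : Fin m, p s.castSucc ≠ p s.succ),
          (-1 : k) ^ m *
            (∏ s : Fin m, (A (p s.castSucc) (p s.castSucc))⁻¹ * A (p s.castSucc) (p s.succ)) *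
            (A (p (Fin.last m)) (p (Fin.last m)))⁻¹ := by
  classical
  set N : Matrix I I k :=
    Matrix.of (fun a b => if a = b then 0 else (A a a)⁻¹ * A a b) with hNdef
  have hNentry : ∀ a b, N a b = if a = b then 0 else (A a a)⁻¹ * A a b := fun a b => rfl
  have hN0 : ∀ a b, N a b ≠ 0 → a ≠ b ∧ A a b ≠ 0 := by
    intro a b h
    rw [hNentry] at h
    by_cases hab : a = b
    · simp [hab] at h
    · refine ⟨hab, ?_⟩
      intro h0
      rw [if_neg hab, h0, mul_zero] at h
      exact h rfl
  have hNil : N ^ (Fintype.card I) = 0 :=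
    nilp_aux _ hacyc N hN0
  have hNil' : N ^ (Fintype.card I + 1) = 0 := by
    rw [pow_succ, hNil, zero_mul]
  set K := Fintype.card I with hK
  set S : Matrix I I k := ∑ m ∈ Finset.range (K + 1), (-N) ^ m with hS
  have hgeom : (1 + N) * S = 1 := by
    have h := mul_neg_geom_sum (-N) (K + 1)
    rw [sub_neg_eq_add] at h
    rw [hS, h, neg_pow, hNil', mul_zero, sub_zero]
  set D : Matrix I I k := Matrix.diagonal (fun a => A a a) with hD
  have hAD : A = D * (1 + N) := by
    ext a b
    rw [hD, Matrix.diagonal_mul]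
    by_cases hab : a = b
    · subst hab
      simp [hNentry, Matrix.one_apply]
    · simp only [Matrix.add_apply, Matrix.one_apply_ne hab, hNentry, if_neg hab, zero_add]
      rw [← mul_assoc, mul_inv_cancel₀ (hdiag a), one_mul]
  set B : Matrix I I k := S * Matrix.diagonal (fun a => (A a a)⁻¹) with hB
  have hAB : A * B = 1 := by
    rw [hAD, hB, mul_assoc, ← mul_assoc (1 + N), hgeom, one_mul, hD,
      Matrix.diagonal_mul_diagonal]
    rw [show (fun a => A a a * (A a a)⁻¹) = fun _ => (1 : k) from
      funext fun a => mul_inv_cancel₀ (hdiag a), Matrix.diagonal_one]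
  intro i j
  rw [Matrix.inv_eq_right_inv hAB, hB, Matrix.mul_diagonal, hS, Matrix.sum_apply,
    Finset.sum_mul]
  refine Finset.sum_congr rfl fun m _ => ?_
  have hneg : (-N) ^ m = ((-1 : k) ^ m) • (N ^ m) := by
    rw [← neg_one_smul k N, smul_pow]
  rw [hneg, Matrix.smul_apply, smul_eq_mul, pow_entry_aux]
  rw [Finset.mul_sum, Finset.sum_mul]
  symm
  have hsub : Finset.univ.filter
      (fun p : Fin (m + 1) → I =>
        p 0 = i ∧ p (Fin.last m) = j ∧ ∀ s : Fin m, p s.castSucc ≠ p s.succ) ⊆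
      Finset.univ.filter (fun p : Fin (m + 1) → I => p 0 = i ∧ p (Fin.last m) = j) := by
    intro p hp
    simp only [Finset.mem_filter, Finset.mem_univ, true_and] at hp ⊢
    exact ⟨hp.1, hp.2.1⟩
  rw [Finset.sum_congr rfl (fun p hp => ?_), Finset.sum_subset hsub (fun p hp hnp => ?_)]
  · -- zero on difference
    simp only [Finset.mem_filter, Finset.mem_univ, true_and, not_and, not_forall] at hp hnp
    obtain ⟨s, hs⟩ := hnp hp.1 hp.2
    push_neg at hs
    have : N (p s.castSucc) (p s.succ) = 0 := by rw [hNentry, if_pos hs]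
    rw [Finset.prod_eq_zero (Finset.mem_univ s) this, mul_zero, zero_mul]
  · -- equal terms on the small set
    simp only [Finset.mem_filter, Finset.mem_univ, true_and] at hp
    rw [hp.2.1]
    congr 1
    congr 1
    refine Finset.prod_congr rfl fun s _ => ?_
    rw [hNentry, if_neg (hp.2.2 s)]
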